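/- arXiv:2604.06511 — 5 statements merged into one kernel-verified Lean document; each statement's English description precedes it below -/
import Mathlib

section
/- Let g : ℝⁿ → ℝ ∪ {+∞} be a proper, lower semicontinuous, convex function and μ > 0. Then for any x, x⋆ ∈ ℝⁿ there exists a symmetric matrix D = D(x, x⋆) with 0 ⪯ D ⪯ I such that prox_{μg}(x) − prox_{μg}(x⋆) = D(x − x⋆). -/
open scoped RealInnerProductSpace

/-- The difference of proximal points is represented by a symmetric operator `D`
with `0 ⪯ D ⪯ I`. -/
theorem stmt7 {n : ℕ} (g : EuclideanSpace ℝ (Fin n) → ℝ) (μ : ℝ) (hμ : 0 < μ)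
    (hg_conv : ConvexOn ℝ Set.univ g) (hg_lsc : LowerSemicontinuous g)
    (prox : EuclideanSpace ℝ (Fin n) → EuclideanSpace ℝ (Fin n))
    (hprox : ∀ v, IsMinOn (fun z => g z + (1 / (2 * μ)) * ‖z - v‖ ^ 2) Set.univ (prox v))
    (x xs : EuclideanSpace ℝ (Fin n)) :
    ∃ D : EuclideanSpace ℝ (Fin n) →ₗ[ℝ] EuclideanSpace ℝ (Fin n),
      (∀ u w, ⟪D u, w⟫ = ⟪u, D w⟫) ∧
      (∀ u, 0 ≤ ⟪D u, u⟫) ∧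
      (∀ u, ⟪D u, u⟫ ≤ ‖u‖ ^ 2) ∧
      D (x - xs) = prox x - prox xs := by
  -- Auxiliary variational inequality for the prox operator
  have key : ∀ v z, g (prox v) - g z ≤ (1/μ) * ⟪prox v - v, z - prox v⟫ := by
    intro v z
    set u := prox v with hu
    have hmin := hprox v
    have step : ∀ t : ℝ, t ∈ Set.Ioc (0:ℝ) 1 →
        g u - g z ≤ (1/μ) * ⟪u - v, z - u⟫ + t * ((1/(2*μ)) * ‖z - u‖^2) := by
      intro t ht
      obtain ⟨ht0, ht1⟩ := ht
      have h1 : g u + (1/(2*μ)) * ‖u - v‖^2 ≤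
          g ((1-t) • u + t • z) + (1/(2*μ)) * ‖((1-t) • u + t • z) - v‖^2 :=
        hmin (Set.mem_univ _)
      have h2 : g ((1-t) • u + t • z) ≤ (1-t) * g u + t * g z :=
        hg_conv.2 (Set.mem_univ u) (Set.mem_univ z) (by linarith) (le_of_lt ht0) (by ring)
      have h3 : ((1-t) • u + t • z) - v = (u - v) + t • (z - u) := by module
      have h4 : ‖((1-t) • u + t • z) - v‖^2
          = ‖u - v‖^2 + 2 * (t * ⟪u - v, z - u⟫) + t^2 * ‖z - u‖^2 := by
        rw [h3, norm_add_sq_real, real_inner_smul_right, norm_smul, mul_pow]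
        simp [Real.norm_eq_abs, sq_abs]
      rw [h4] at h1
      have h5 : t * (g u - g z) ≤
          t * (2 * ((1/(2*μ)) * ⟪u - v, z - u⟫) + t * ((1/(2*μ)) * ‖z - u‖^2)) := by
        nlinarith [h1, h2]
      have h6 : g u - g z ≤
          2 * ((1/(2*μ)) * ⟪u - v, z - u⟫) + t * ((1/(2*μ)) * ‖z - u‖^2) :=
        (mul_le_mul_iff_right₀ ht0).mp h5
      have heq : (1/μ) * ⟪u - v, z - u⟫ = 2 * ((1/(2*μ)) * ⟪u - v, z - u⟫) := by
        field_simp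
      rw [heq]
      linarith
    have hmem : Set.Ioc (0:ℝ) 1 ∈ nhdsWithin 0 (Set.Ioi 0) :=
      Ioc_mem_nhdsGT_of_mem (by simp)
    have lim : Filter.Tendsto
        (fun t : ℝ => (1/μ) * ⟪u - v, z - u⟫ + t * ((1/(2*μ)) * ‖z - u‖^2))
        (nhdsWithin 0 (Set.Ioi 0)) (nhds ((1/μ) * ⟪u - v, z - u⟫)) := by
      have hc : Continuous (fun t : ℝ =>
          (1/μ) * ⟪u - v, z - u⟫ + t * ((1/(2*μ)) * ‖z - u‖^2)) := by continuity
      have h0 : Filter.Tendsto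
          (fun t : ℝ => (1/μ) * ⟪u - v, z - u⟫ + t * ((1/(2*μ)) * ‖z - u‖^2))
          (nhdsWithin 0 (Set.Ioi 0))
          (nhds ((1/μ) * ⟪u - v, z - u⟫ + 0 * ((1/(2*μ)) * ‖z - u‖^2))) :=
        (hc.tendsto 0).mono_left nhdsWithin_le_nhds
      simpa using h0
    exact ge_of_tendsto lim (Filter.eventually_of_mem hmem step)
  set P := prox x - prox xs with hP
  set p := x - xs with hp
  -- firm nonexpansiveness
  have firm : ‖P‖^2 ≤ ⟪p, P⟫ := by
    have k1 := key x (prox xs)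
    have k2 := key xs (prox x)
    have hμ' : (0:ℝ) < 1/μ := by positivity
    have hsum : 0 ≤ (1/μ) * (⟪prox x - x, prox xs - prox x⟫ + ⟪prox xs - xs, prox x - prox xs⟫) := by
      nlinarith
    have hinner : ⟪prox x - x, prox xs - prox x⟫ + ⟪prox xs - xs, prox x - prox xs⟫
        = ⟪p, P⟫ - ‖P‖^2 := by
      simp only [hP, hp, inner_sub_left, inner_sub_right, real_inner_self_eq_norm_sq,
        norm_sub_sq_real]
      linarith [real_inner_comm (prox xs) (prox x), real_inner_comm x (prox x),
        real_inner_comm xs (prox xs), real_inner_comm x (prox xs),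
        real_inner_comm xs (prox x), real_inner_comm x xs]
    rw [hinner] at hsum
    nlinarith
  by_cases hP0 : P = 0
  · refine ⟨0, ?_, ?_, ?_, ?_⟩
    · intro u w; simp
    · intro u; simp
    · intro u; simp [sq_nonneg]
    · simp only [LinearMap.zero_apply]; exact hP0.symm
  · have hnorm : (0:ℝ) < ‖P‖^2 := pow_pos (norm_pos_iff.mpr hP0) 2
    have hc : (0:ℝ) < ⟪p, P⟫ := lt_of_lt_of_le hnorm firm
    set c : ℝ := ⟪p, P⟫ with hcdef
    refine ⟨{ toFun := fun u => (⟪P, u⟫ / c) • P,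
              map_add' := by
                intro a b
                rw [inner_add_right, add_div, add_smul]
              map_smul' := by
                intro m a
                simp only [RingHom.id_apply]
                rw [real_inner_smul_right, smul_smul, mul_div_assoc] }, ?_, ?_, ?_, ?_⟩
    · intro u w
      simp only [LinearMap.coe_mk, AddHom.coe_mk, real_inner_smul_left, real_inner_smul_right]
      rw [real_inner_comm u P]
      ring
    · intro u
      simp only [LinearMap.coe_mk, AddHom.coe_mk, real_inner_smul_left]
      have h1 : ⟪P, u⟫ / c * ⟪P, u⟫ = ⟪P, u⟫^2 / c := by ring
      rw [h1]
      exact div_nonneg (sq_nonneg _) hc.le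
    · intro u
      simp only [LinearMap.coe_mk, AddHom.coe_mk, real_inner_smul_left]
      have h1 : ⟪P, u⟫ / c * ⟪P, u⟫ = ⟪P, u⟫^2 / c := by ring
      rw [h1, div_le_iff₀ hc]
      have hcs : |⟪P, u⟫| ≤ ‖P‖ * ‖u‖ := abs_real_inner_le_norm P u
      have h2 : ⟪P, u⟫^2 ≤ ‖P‖^2 * ‖u‖^2 := by
        nlinarith [abs_nonneg ⟪P, u⟫, sq_abs ⟪P, u⟫]
      have h3 : ‖P‖^2 * ‖u‖^2 ≤ ‖u‖^2 * c := by
        rw [mul_comm (‖u‖^2) c]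
        exact mul_le_mul_of_nonneg_right firm (sq_nonneg _)
      linarith [h2, h3]
    · simp only [LinearMap.coe_mk, AddHom.coe_mk]
      have hcc : ⟪P, p⟫ = c := by rw [hcdef]; exact (real_inner_comm P p).symm
      rw [hcc, div_self (ne_of_gt hc), one_smul]
end

section
/- Let P = prox_{μg}(x) − prox_{μg}(x⋆) ≠ 0 and p = x − x⋆, where prox_{μg} is firmly nonexpansive, and define D = PPᵀ/(Pᵀp). Then D is symmetric, D ⪰ 0, D ⪬ I (i.e., I − D ⪰ 0), and D p = P. -/
open Matrix

lemma vecMulVec_mulVec' {n : ℕ} (a b x : Fin n → ℝ) :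
    (Matrix.vecMulVec a b) *ᵥ x = (b ⬝ᵥ x) • a := by
  funext i
  simp only [Matrix.mulVec, Matrix.vecMulVec_apply, dotProduct, Pi.smul_apply,
    smul_eq_mul, Finset.sum_mul]
  exact Finset.sum_congr rfl fun j _ => by ring

/-- Properties of the rank-one matrix `D = PPᵀ/(Pᵀp)` built from a firmly
nonexpansive displacement. -/
theorem stmt8 {n : ℕ} (P p : Fin n → ℝ) (hP : P ≠ 0)
    (hfirm : P ⬝ᵥ P ≤ P ⬝ᵥ p) :
    (((P ⬝ᵥ p)⁻¹ • Matrix.vecMulVec P P : Matrix (Fin n) (Fin n) ℝ)).IsSymm ∧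
    ((P ⬝ᵥ p)⁻¹ • Matrix.vecMulVec P P : Matrix (Fin n) (Fin n) ℝ).PosSemidef ∧
    ((1 : Matrix (Fin n) (Fin n) ℝ) - (P ⬝ᵥ p)⁻¹ • Matrix.vecMulVec P P).PosSemidef ∧
    ((P ⬝ᵥ p)⁻¹ • Matrix.vecMulVec P P : Matrix (Fin n) (Fin n) ℝ).mulVec p = P := by
  have hPP : 0 < P ⬝ᵥ P := by
    simpa using (dotProduct_self_star_pos_iff (v := P)).mpr hP
  have hc : 0 < P ⬝ᵥ p := lt_of_lt_of_le hPP hfirm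
  have hsymm : (((P ⬝ᵥ p)⁻¹ • Matrix.vecMulVec P P : Matrix (Fin n) (Fin n) ℝ)).IsSymm := by
    ext i j
    simp [Matrix.IsSymm, Matrix.vecMulVec_apply, mul_comm]
  have hCS : ∀ x : Fin n → ℝ, (P ⬝ᵥ x) ^ 2 ≤ (P ⬝ᵥ P) * (x ⬝ᵥ x) := by
    intro x
    simpa [dotProduct, pow_two] using
      Finset.sum_mul_sq_le_sq_mul_sq Finset.univ P x
  have hquad : ∀ x : Fin n → ℝ,
      x ⬝ᵥ (((P ⬝ᵥ p)⁻¹ • Matrix.vecMulVec P P : Matrix (Fin n) (Fin n) ℝ) *ᵥ x)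
        = (P ⬝ᵥ p)⁻¹ * (P ⬝ᵥ x) ^ 2 := by
    intro x
    rw [Matrix.smul_mulVec, vecMulVec_mulVec', dotProduct_smul, dotProduct_smul]
    simp [pow_two, dotProduct_comm x P]
  refine ⟨hsymm, posSemidef_iff_dotProduct_mulVec.mpr ⟨hsymm, ?_⟩,
    posSemidef_iff_dotProduct_mulVec.mpr ⟨?_, ?_⟩, ?_⟩
  · intro x
    simp only [star_trivial, hquad]
    positivity
  · exact Matrix.isHermitian_one.sub (by exact hsymm)
  · intro x
    simp only [star_trivial, Matrix.sub_mulVec, dotProduct_sub, Matrix.one_mulVec, hquad]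
    have h1 : (P ⬝ᵥ x) ^ 2 ≤ (P ⬝ᵥ p) * (x ⬝ᵥ x) :=
      le_trans (hCS x) (mul_le_mul_of_nonneg_right hfirm
        (Finset.sum_nonneg fun j _ => mul_self_nonneg _))
    rw [sub_nonneg, inv_mul_le_iff₀ hc]
    linarith
  · rw [Matrix.smul_mulVec, vecMulVec_mulVec']
    funext i
    simp
    field_simp
end

section
/- Let B be a real symmetric n×n matrix with m_f·I ⪯ B ⪯ L_f·I (0 < m_f ≤ L_f), let D be a diagonal matrix with entries 0 ≤ D_ii ≤ 1, let μ ≤ 1/L_f, and define Z = (1/μ)(I − D) + D B. Then Z + Zᵀ ⪰ (3/2) B. -/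
open Matrix

lemma psd_smul' {n : ℕ} {M : Matrix (Fin n) (Fin n) ℝ} (hM : M.PosSemidef) {c : ℝ}
    (hc : 0 ≤ c) : (c • M).PosSemidef := by
  constructor
  · unfold Matrix.IsHermitian
    rw [conjTranspose_smul, hM.1]
    simp
  · intro x
    have h := mul_nonneg hc (hM.2 x)
    simp only [Finsupp.sum, Finset.mul_sum] at h ⊢
    refine le_of_le_of_eq h (Finset.sum_congr rfl fun i _ => Finset.sum_congr rfl fun j _ => ?_)
    simp only [Matrix.smul_apply, smul_eq_mul]; ring

/-- Lower bound `Z + Zᵀ ⪰ (3/2)B` for `Z = (1/μ)(I - D) + DB`. -/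
theorem stmt9 {n : ℕ} (B D : Matrix (Fin n) (Fin n) ℝ) (mf Lf μ : ℝ)
    (hmf : 0 < mf) (hmL : mf ≤ Lf)
    (hBsymm : B.IsSymm)
    (hBm : (B - mf • (1 : Matrix (Fin n) (Fin n) ℝ)).PosSemidef)
    (hBL : (Lf • (1 : Matrix (Fin n) (Fin n) ℝ) - B).PosSemidef)
    (d : Fin n → ℝ) (hD : D = Matrix.diagonal d) (hd : ∀ i, 0 ≤ d i ∧ d i ≤ 1)
    (hμ : 0 < μ) (hμL : μ ≤ 1 / Lf) :
    ((1 / μ) • ((1 : Matrix (Fin n) (Fin n) ℝ) - D) + D * B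
      + ((1 / μ) • ((1 : Matrix (Fin n) (Fin n) ℝ) - D) + D * B)ᵀ
      - (3 / 2 : ℝ) • B).PosSemidef := by
  have hLf : 0 < Lf := lt_of_lt_of_le hmf hmL
  have hμLf : Lf ≤ 1 / μ := by
    rw [le_div_iff₀ hμ]
    calc Lf * μ ≤ Lf * (1 / Lf) := by nlinarith
    _ = 1 := by field_simp
  -- B is PSD
  have hBpsd : B.PosSemidef := by
    have h1 : (mf • (1 : Matrix (Fin n) (Fin n) ℝ)).PosSemidef :=
      psd_smul' Matrix.PosSemidef.one hmf.le
    have := hBm.add h1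
    simpa using this
  set E : Matrix (Fin n) (Fin n) ℝ := (1 : Matrix (Fin n) (Fin n) ℝ) - D with hE
  set C : Matrix (Fin n) (Fin n) ℝ := (2:ℝ) • D - 1 with hC
  have hEd : E = Matrix.diagonal (fun i => 1 - d i) := by
    rw [hE, hD, ← Matrix.diagonal_one, Matrix.diagonal_sub]
  have hCd : C = Matrix.diagonal (fun i => 2 * d i - 1) := by
    rw [hC, hD, ← Matrix.diagonal_one, ← Matrix.diagonal_smul, Matrix.diagonal_sub]
    congr 1
  have hBt : Bᵀ = B := hBsymm
  have hDt : Dᵀ = D := by rw [hD]; exact Matrix.diagonal_transpose d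
  have hEH : Eᴴ = E := by
    rw [hEd, Matrix.diagonal_conjTranspose]; simp
  have hCH : Cᴴ = C := by
    rw [hCd, Matrix.diagonal_conjTranspose]; simp
  -- PSD of pieces
  have p1 : ((1/2 : ℝ) • (Cᴴ * B * C)).PosSemidef :=
    psd_smul' (hBpsd.conjTranspose_mul_mul_same C) (by norm_num)
  have p2 : ((2 : ℝ) • (Eᴴ * (Lf • (1 : Matrix (Fin n) (Fin n) ℝ) - B) * E)).PosSemidef :=
    psd_smul' (hBL.conjTranspose_mul_mul_same E) (by norm_num)
  have p3 : ((2 * Lf) • (E - E * E)).PosSemidef := by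
    have hdiag : (E - E * E).PosSemidef := by
      rw [hEd, Matrix.diagonal_mul_diagonal, Matrix.diagonal_sub]
      refine Matrix.posSemidef_diagonal_iff.mpr fun i => ?_
      nlinarith [(hd i).1, (hd i).2]
    exact psd_smul' hdiag (by positivity)
  have p4 : ((2 * (1 / μ - Lf)) • E).PosSemidef := by
    have hdiag : E.PosSemidef := by
      rw [hEd]
      exact Matrix.posSemidef_diagonal_iff.mpr fun i => by linarith [(hd i).2]
    exact psd_smul' hdiag (by nlinarith)
  have key : ((1 / μ) • ((1 : Matrix (Fin n) (Fin n) ℝ) - D) + D * B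
      + ((1 / μ) • ((1 : Matrix (Fin n) (Fin n) ℝ) - D) + D * B)ᵀ
      - (3 / 2 : ℝ) • B)
      = (1/2 : ℝ) • (Cᴴ * B * C)
        + (2 : ℝ) • (Eᴴ * (Lf • (1 : Matrix (Fin n) (Fin n) ℝ) - B) * E)
        + (2 * Lf) • (E - E * E) + (2 * (1 / μ - Lf)) • E := by
    rw [hCH, hEH, hC, hE]
    rw [Matrix.transpose_add, Matrix.transpose_smul, Matrix.transpose_sub,
      Matrix.transpose_one, hDt, Matrix.transpose_mul, hBt, hDt]
    simp only [Matrix.mul_sub, Matrix.sub_mul, Matrix.mul_add, Matrix.add_mul,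
      Matrix.mul_one, Matrix.one_mul, Matrix.smul_mul, Matrix.mul_smul,
      smul_sub, sub_smul, smul_add, add_smul, smul_smul, mul_assoc]
    ring_nf
    module
  rw [key]
  exact ((p1.add p2).add p3).add p4
end

section
/- Let f : ℝⁿ → ℝ be m_f-strongly convex with L_f-Lipschitz gradient, g proper lsc convex, μ > 0, and consider the dynamics ẋ = −∇f(x) − ∇M_{μg}(x+μα), α̇ = k₁∇f(x) + k₂α + k₃∇M_{μg}(x+μα) with k₁, k₃ > 0 and k₂ < k₂^crit := −k₃ − (k₁²μ/(2k₃))·(L_f²/m_f). Then any equilibrium (x⋆, α⋆) is globally exponentially stable: there exists c > 0 such that ‖(x(t),α(t)) − (x⋆,α⋆)‖² ≤ c·e^{−rt/2} with r = min(m_f, −2(k₂ − k₂^crit)) > 0. -/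
set_option maxHeartbeats 1000000

open scoped RealInnerProductSpace


lemma prox_firm {E : Type*} [NormedAddCommGroup E] [InnerProductSpace ℝ E]
    (g : E → ℝ) (μ : ℝ) (hμ : 0 < μ) (hg : ConvexOn ℝ Set.univ g)
    (prox : E → E)
    (hprox : ∀ v, IsMinOn (fun z => g z + (1 / (2 * μ)) * ‖z - v‖ ^ 2) Set.univ (prox v))
    (v w : E) :
    ‖prox v - prox w‖ ^ 2 ≤ ⟪prox v - prox w, v - w⟫ := by
  have key : ∀ (u : E) (q : E) (s : ℝ), 0 < s → s ≤ 1 →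
      0 ≤ s * (g q - g (prox u)) + (s / μ) * ⟪prox u - u, q - prox u⟫
        + (s ^ 2 / (2 * μ)) * ‖q - prox u‖ ^ 2 := by
    intro u q s hs hs1
    set p := prox u with hp
    have hmin := (hprox u) (Set.mem_univ (p + s • (q - p)))
    have hconv : g (p + s • (q - p)) ≤ (1 - s) * g p + s * g q := by
      have := hg.2 (Set.mem_univ p) (Set.mem_univ q) (by linarith : (0:ℝ) ≤ 1 - s)
        (le_of_lt hs) (by ring)
      have heq : (1 - s) • p + s • q = p + s • (q - p) := by
        rw [smul_sub]; module
      rwa [heq] at this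
    have hnorm : ‖p + s • (q - p) - u‖ ^ 2
        = ‖p - u‖ ^ 2 + 2 * s * ⟪p - u, q - p⟫ + s ^ 2 * ‖q - p‖ ^ 2 := by
      have h1 : p + s • (q - p) - u = (p - u) + s • (q - p) := by abel
      rw [h1, norm_add_sq_real, real_inner_smul_right, norm_smul]
      simp [Real.norm_eq_abs, mul_pow, sq_abs]
      ring
    have h2μ : (0:ℝ) < 2 * μ := by linarith
    have hin : g p + (1 / (2*μ)) * ‖p - u‖ ^ 2
        ≤ (1 - s) * g p + s * g q + (1 / (2*μ)) * (‖p - u‖ ^ 2 + 2 * s * ⟪p - u, q - p⟫ + s ^ 2 * ‖q - p‖ ^ 2) := by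
      calc g p + (1 / (2*μ)) * ‖p - u‖ ^ 2 ≤ g (p + s • (q - p)) + (1 / (2*μ)) * ‖p + s • (q - p) - u‖ ^ 2 := hmin
        _ ≤ _ := by rw [← hnorm]; linarith
    have e1 : (s / μ) * ⟪p - u, q - p⟫ = (1 / (2*μ)) * (2 * s * ⟪p - u, q - p⟫) := by
      field_simp
    have e2 : (s ^ 2 / (2 * μ)) * ‖q - p‖ ^ 2 = (1 / (2*μ)) * (s ^ 2 * ‖q - p‖ ^ 2) := by
      field_simp
    nlinarith [hin]
  have hpw : ∀ s : ℝ, 0 < s → s ≤ 1 →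
      (1 - s) * ‖prox v - prox w‖ ^ 2 ≤ ⟪prox v - prox w, v - w⟫ := by
    intro s hs hs1
    set p := prox v with hpv
    set q := prox w with hqw
    have h1 := key v q s hs hs1
    have h2 := key w p s hs hs1
    rw [← hpv] at h1
    rw [← hqw] at h2
    rw [norm_sub_rev q p] at h1
    have ha : ⟪p - v, q - p⟫ + ⟪q - w, p - q⟫ = ⟪v - w, p - q⟫ - ‖p - q‖ ^ 2 := by
      simp only [inner_sub_left, inner_sub_right, ← real_inner_self_eq_norm_sq]
      ring
    have hcomm : ⟪p - q, v - w⟫ = ⟪v - w, p - q⟫ := real_inner_comm _ _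
    have hsum : 0 ≤ (s / μ) * (⟪v - w, p - q⟫ - ‖p - q‖ ^ 2) + (s ^ 2 / μ) * ‖p - q‖ ^ 2 := by
      have hmul : (s / μ) * ⟪p - v, q - p⟫ + (s / μ) * ⟪q - w, p - q⟫
          = (s / μ) * (⟪v - w, p - q⟫ - ‖p - q‖ ^ 2) := by rw [← mul_add, ha]
      have he : (s ^ 2 / (2 * μ)) * ‖p - q‖ ^ 2 + (s ^ 2 / (2 * μ)) * ‖p - q‖ ^ 2
          = (s ^ 2 / μ) * ‖p - q‖ ^ 2 := by
        field_simp; ring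
      linarith [h1, h2]
    rw [hcomm]
    have hμs : 0 < s / μ := div_pos hs hμ
    have hre : 0 ≤ (s / μ) * (⟪v - w, p - q⟫ - (1 - s) * ‖p - q‖ ^ 2) := by
      have : (s / μ) * (⟪v - w, p - q⟫ - (1 - s) * ‖p - q‖ ^ 2)
          = (s / μ) * (⟪v - w, p - q⟫ - ‖p - q‖ ^ 2) + (s ^ 2 / μ) * ‖p - q‖ ^ 2 := by
        field_simp
        ring
      rw [this]; exact hsum
    nlinarith [hre, hμs]
  -- limit argument
  set A := ⟪prox v - prox w, v - w⟫ with hA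
  set B := ‖prox v - prox w‖ ^ 2 with hB
  have hB0 : 0 ≤ B := by positivity
  have hA0 : 0 ≤ A := by have := hpw 1 one_pos le_rfl; linarith
  by_contra hc
  push_neg at hc
  have hBpos : 0 < B := lt_of_le_of_lt hA0 hc
  have hs : 0 < (B - A) / (2 * B) := div_pos (by linarith) (by linarith)
  have hs1 : (B - A) / (2 * B) ≤ 1 := by
    rw [div_le_one (by positivity)]; linarith
  have hkey := hpw _ hs hs1
  have hsB : ((B - A) / (2 * B)) * B = (B - A) / 2 := by
    field_simp
  rw [sub_mul, one_mul, hsB] at hkey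
  linarith

set_option maxHeartbeats 1000000 in

lemma lyap_scalar (mf Lf μ k1 k2 k3 r L ne na nu P1 P2 P3 P4 : ℝ)
    (hmf : 0 < mf) (hμ : 0 < μ) (hk1 : 0 < k1) (hk3 : 0 < k3)
    (hne : 0 ≤ ne) (hna : 0 ≤ na) (hnu : 0 ≤ nu) (hL : 0 ≤ L) (hL2 : L ^ 2 ≤ Lf ^ 2)
    (hr1 : r ≤ mf) (hr2 : k3 * mf * r ≤ -2 * k3 * mf * (k2 + k3) - μ * k1 ^ 2 * Lf ^ 2)
    (h1 : mf * ne ^ 2 ≤ P1) (h2 : P3 ≤ L * ne * na) (h4 : P4 ≤ nu * na)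
    (h3 : μ * nu ^ 2 ≤ P2 + μ * P4) :
    k3 * (2 * (-P1 - P2)) + μ * (2 * (k1 * P3 + k2 * na ^ 2 + k3 * P4))
      ≤ -r * (k3 * ne ^ 2 + μ * na ^ 2) := by
  have hkm : 0 < k3 * mf := mul_pos hk3 hmf
  rw [← mul_le_mul_iff_right₀ hkm]
  have t1 := mul_le_mul_of_nonneg_left h1 (by positivity : (0:ℝ) ≤ 2 * k3 ^ 2 * mf)
  have t2 := mul_le_mul_of_nonneg_left h3 (by positivity : (0:ℝ) ≤ 2 * k3 ^ 2 * mf)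
  have t3 := mul_le_mul_of_nonneg_left h2 (by positivity : (0:ℝ) ≤ 2 * μ * k1 * k3 * mf)
  have t4 := mul_le_mul_of_nonneg_left h4 (by positivity : (0:ℝ) ≤ 4 * μ * k3 ^ 2 * mf)
  have t5 : 4 * μ * k3 ^ 2 * mf * (nu * na) ≤ 2 * μ * k3 ^ 2 * mf * (nu ^ 2 + na ^ 2) := by
    nlinarith [sq_nonneg (nu - na), mul_pos (mul_pos hμ (mul_pos hk3 hk3)) hmf]
  have t6 : 2 * μ * k1 * k3 * mf * (L * ne * na)
      ≤ k3 ^ 2 * mf ^ 2 * ne ^ 2 + μ ^ 2 * k1 ^ 2 * L ^ 2 * na ^ 2 := by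
    nlinarith [sq_nonneg (k3 * mf * ne - μ * k1 * L * na)]
  have t7 := mul_le_mul_of_nonneg_left hL2 (by positivity : (0:ℝ) ≤ μ ^ 2 * k1 ^ 2 * na ^ 2)
  have t8 := mul_le_mul_of_nonneg_left hr2 (by positivity : (0:ℝ) ≤ μ * na ^ 2)
  have t9 := mul_le_mul_of_nonneg_left hr1 (by positivity : (0:ℝ) ≤ k3 ^ 2 * mf * ne ^ 2)
  linarith [t1, t2, t3, t4, t5, t6, t7, t8, t9]


lemma coco_aux {E : Type*} [NormedAddCommGroup E] [InnerProductSpace ℝ E]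
    (μ : ℝ) (hμ : 0 < μ) (dv dp : E) (h : ‖dp‖ ^ 2 ≤ ⟪dp, dv⟫) :
    μ * ‖(1 / μ) • (dv - dp)‖ ^ 2 ≤ ⟪(1 / μ) • (dv - dp), dv⟫ := by
  rw [norm_smul, real_inner_smul_left]
  have h2 : ‖dv - dp‖ ^ 2 ≤ ⟪dv - dp, dv⟫ := by
    rw [inner_sub_left, @norm_sub_sq_real]
    have h3 := real_inner_self_eq_norm_sq dv
    have h4 := real_inner_comm dp dv
    linarith
  have hn : ‖(1/μ : ℝ)‖ = 1/μ := by
    rw [Real.norm_eq_abs, abs_of_pos (by positivity)]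
  rw [hn, mul_pow]
  have key : μ * ((1/μ)^2 * ‖dv - dp‖^2) = (1/μ) * ‖dv - dp‖^2 := by
    field_simp
  rw [key]
  have := mul_le_mul_of_nonneg_left h2 (by positivity : (0:ℝ) ≤ 1/μ)
  linarith

/-- Global exponential stability of the unconstrained dynamic Prox-CMO dynamics. -/
theorem stmt16 {n : ℕ}
    (f : EuclideanSpace ℝ (Fin n) → ℝ)
    (f' : EuclideanSpace ℝ (Fin n) → EuclideanSpace ℝ (Fin n))
    (mf Lf : ℝ) (hmf : 0 < mf)
    (hf' : ∀ x, HasGradientAt f (f' x) x)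
    (hsc : ∀ x y, mf * ‖x - y‖ ^ 2 ≤ ⟪f' x - f' y, x - y⟫)
    (hlip : LipschitzWith Lf.toNNReal f')
    (g : EuclideanSpace ℝ (Fin n) → ℝ) (μ : ℝ) (hμ : 0 < μ)
    (hg_conv : ConvexOn ℝ Set.univ g) (hg_lsc : LowerSemicontinuous g)
    (prox : EuclideanSpace ℝ (Fin n) → EuclideanSpace ℝ (Fin n))
    (hprox : ∀ v, IsMinOn (fun z => g z + (1 / (2 * μ)) * ‖z - v‖ ^ 2) Set.univ (prox v))
    (k1 k2 k3 : ℝ) (hk1 : 0 < k1) (hk3 : 0 < k3)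
    (hk2 : k2 < -k3 - (k1 ^ 2 * μ / (2 * k3)) * (Lf ^ 2 / mf))
    (x α : ℝ → EuclideanSpace ℝ (Fin n))
    (hx : ∀ t, HasDerivAt x
      (-f' (x t) - (1 / μ) • ((x t + μ • α t) - prox (x t + μ • α t))) t)
    (hα : ∀ t, HasDerivAt α
      (k1 • f' (x t) + k2 • α t
        + k3 • ((1 / μ) • ((x t + μ • α t) - prox (x t + μ • α t)))) t)
    (xs αs : EuclideanSpace ℝ (Fin n))
    (heq1 : -f' xs - (1 / μ) • ((xs + μ • αs) - prox (xs + μ • αs)) = 0)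
    (heq2 : k1 • f' xs + k2 • αs
        + k3 • ((1 / μ) • ((xs + μ • αs) - prox (xs + μ • αs))) = 0) :
    0 < min mf (-2 * (k2 - (-k3 - (k1 ^ 2 * μ / (2 * k3)) * (Lf ^ 2 / mf)))) ∧
    ∃ c > 0, ∀ t ≥ (0 : ℝ),
      ‖x t - xs‖ ^ 2 + ‖α t - αs‖ ^ 2
        ≤ c * Real.exp
            (-(min mf (-2 * (k2 - (-k3 - (k1 ^ 2 * μ / (2 * k3)) * (Lf ^ 2 / mf)))) * t) / 2) := by
  set r := min mf (-2 * (k2 - (-k3 - (k1 ^ 2 * μ / (2 * k3)) * (Lf ^ 2 / mf)))) with hrdef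
  have hr0 : 0 < r := lt_min hmf (by nlinarith)
  have hr1 : r ≤ mf := min_le_left _ _
  have hr2 : k3 * mf * r ≤ -2 * k3 * mf * (k2 + k3) - μ * k1 ^ 2 * Lf ^ 2 := by
    have h := mul_le_mul_of_nonneg_left (min_le_right mf
      (-2 * (k2 - (-k3 - (k1 ^ 2 * μ / (2 * k3)) * (Lf ^ 2 / mf)))))
      (le_of_lt (mul_pos hk3 hmf))
    have he : k3 * mf * (-2 * (k2 - (-k3 - (k1 ^ 2 * μ / (2 * k3)) * (Lf ^ 2 / mf))))
        = -2 * k3 * mf * (k2 + k3) - μ * k1 ^ 2 * Lf ^ 2 := by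
      field_simp
      ring
    rw [← hrdef] at h
    linarith [h, he.le, he.ge]
  refine ⟨hr0, ?_⟩
  -- Lipschitz constant
  set L := max Lf 0 with hLdef
  have hL : 0 ≤ L := le_max_right _ _
  have hL2 : L ^ 2 ≤ Lf ^ 2 := by
    rcases le_total Lf 0 with h | h
    · rw [hLdef, max_eq_right h]
      simpa using sq_nonneg Lf
    · rw [hLdef, max_eq_left h]
  have hlipn : ∀ p q, ‖f' p - f' q‖ ≤ L * ‖p - q‖ := by
    intro p q
    have h := hlip.dist_le_mul p q
    rw [dist_eq_norm, dist_eq_norm] at h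
    rwa [Real.coe_toNNReal'] at h
  -- equilibrium values
  set us := (1 / μ) • ((xs + μ • αs) - prox (xs + μ • αs)) with husdef
  set fs := f' xs with hfsdef
  -- time dependent quantities
  set U : ℝ → EuclideanSpace ℝ (Fin n) :=
    fun t => (1 / μ) • ((x t + μ • α t) - prox (x t + μ • α t)) with hUdef
  -- derivatives of differences
  have hde : ∀ t, HasDerivAt (fun s => x s - xs)
      (-(f' (x t) - fs) - (U t - us)) t := by
    intro t
    have h := (hx t).sub_const xs
    have he : -f' (x t) - U t = -(f' (x t) - fs) - (U t - us) := by
      have h2 : (-(f' (x t) - fs) - (U t - us)) = (-f' (x t) - U t) - (-fs - us) := by abel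
      rw [h2, hfsdef, husdef, heq1, sub_zero]
    rw [← he]
    exact h
  have hda : ∀ t, HasDerivAt (fun s => α s - αs)
      (k1 • (f' (x t) - fs) + k2 • (α t - αs) + k3 • (U t - us)) t := by
    intro t
    have h := (hα t).sub_const αs
    have he : k1 • f' (x t) + k2 • α t + k3 • U t
        = k1 • (f' (x t) - fs) + k2 • (α t - αs) + k3 • (U t - us) := by
      have h2 : k1 • (f' (x t) - fs) + k2 • (α t - αs) + k3 • (U t - us)
          = (k1 • f' (x t) + k2 • α t + k3 • U t) - (k1 • fs + k2 • αs + k3 • us) := by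
        simp only [smul_sub]; abel
      rw [h2, hfsdef, husdef, heq2, sub_zero]
    rw [← he]
    exact h
  -- Lyapunov function
  set V : ℝ → ℝ := fun t => k3 * ⟪x t - xs, x t - xs⟫ + μ * ⟪α t - αs, α t - αs⟫ with hVdef
  have hV0 : ∀ t, 0 ≤ V t := by
    intro t
    have h1 := real_inner_self_nonneg (x := x t - xs)
    have h2 := real_inner_self_nonneg (x := α t - αs)
    have := mul_nonneg hk3.le h1
    have := mul_nonneg hμ.le h2
    simp only [hVdef]
    linarith
  have hVderiv : ∀ t, HasDerivAt V
      (k3 * (⟪x t - xs, -(f' (x t) - fs) - (U t - us)⟫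
          + ⟪-(f' (x t) - fs) - (U t - us), x t - xs⟫)
        + μ * (⟪α t - αs, k1 • (f' (x t) - fs) + k2 • (α t - αs) + k3 • (U t - us)⟫
          + ⟪k1 • (f' (x t) - fs) + k2 • (α t - αs) + k3 • (U t - us), α t - αs⟫)) t := by
    intro t
    exact ((((hde t).inner ℝ (hde t))).const_mul k3).add
      ((((hda t).inner ℝ (hda t))).const_mul μ)
  -- the key decay inequality
  have hVle : ∀ t,
      (k3 * (⟪x t - xs, -(f' (x t) - fs) - (U t - us)⟫
          + ⟪-(f' (x t) - fs) - (U t - us), x t - xs⟫)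
        + μ * (⟪α t - αs, k1 • (f' (x t) - fs) + k2 • (α t - αs) + k3 • (U t - us)⟫
          + ⟪k1 • (f' (x t) - fs) + k2 • (α t - αs) + k3 • (U t - us), α t - αs⟫))
        ≤ -r * V t := by
    intro t
    -- cocoercivity
    have hdu : U t - us = (1 / μ) • (((x t + μ • α t) - (xs + μ • αs))
        - (prox (x t + μ • α t) - prox (xs + μ • αs))) := by
      rw [hUdef, husdef]
      simp only [← smul_sub]
      congr 1
      abel
    have hfirm := prox_firm g μ hμ hg_conv prox hprox (x t + μ • α t) (xs + μ • αs)
    have hcoco := coco_aux μ hμ ((x t + μ • α t) - (xs + μ • αs))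
      (prox (x t + μ • α t) - prox (xs + μ • αs)) hfirm
    rw [← hdu] at hcoco
    have hdv : (x t + μ • α t) - (xs + μ • αs) = (x t - xs) + μ • (α t - αs) := by
      rw [smul_sub]; abel
    rw [hdv, inner_add_right, real_inner_smul_right] at hcoco
    -- strong convexity
    have h1 := hsc (x t) xs
    -- Cauchy-Schwarz bounds
    have h2 : ⟪f' (x t) - fs, α t - αs⟫ ≤ L * ‖x t - xs‖ * ‖α t - αs‖ := by
      calc ⟪f' (x t) - fs, α t - αs⟫ ≤ ‖f' (x t) - fs‖ * ‖α t - αs‖ :=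
            real_inner_le_norm _ _
        _ ≤ L * ‖x t - xs‖ * ‖α t - αs‖ := by
            have := hlipn (x t) xs
            rw [hfsdef]
            nlinarith [norm_nonneg (α t - αs), norm_nonneg (f' (x t) - f' xs)]
    have h4 : ⟪U t - us, α t - αs⟫ ≤ ‖U t - us‖ * ‖α t - αs‖ := real_inner_le_norm _ _
    set dfv := f' (x t) - fs with hdfv
    set duv := U t - us with hduv
    set ev := x t - xs with hev
    set av := α t - αs with hav
    -- expand the inner products
    have hVt : V t = k3 * ‖ev‖ ^ 2 + μ * ‖av‖ ^ 2 := by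
      rw [hVdef, hev, hav]
      simp only [real_inner_self_eq_norm_sq]
    rw [hVt]
    have hexp : (k3 * (⟪ev, -dfv - duv⟫ + ⟪-dfv - duv, ev⟫)
        + μ * (⟪av, k1 • dfv + k2 • av + k3 • duv⟫ + ⟪k1 • dfv + k2 • av + k3 • duv, av⟫))
        = k3 * (2 * (-⟪dfv, ev⟫ - ⟪duv, ev⟫))
          + μ * (2 * (k1 * ⟪dfv, av⟫ + k2 * ‖av‖ ^ 2 + k3 * ⟪duv, av⟫)) := by
      simp only [inner_sub_left, inner_sub_right, inner_neg_left, inner_neg_right,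
        inner_add_left, inner_add_right, real_inner_smul_left, real_inner_smul_right,
        real_inner_self_eq_norm_sq]
      rw [real_inner_comm ev dfv, real_inner_comm ev duv, real_inner_comm av dfv,
        real_inner_comm av duv]
      ring
    rw [hexp]
    exact lyap_scalar mf Lf μ k1 k2 k3 r L ‖ev‖ ‖av‖ ‖duv‖
      ⟪dfv, ev⟫ ⟪duv, ev⟫ ⟪dfv, av⟫ ⟪duv, av⟫
      hmf hμ hk1 hk3 (norm_nonneg _) (norm_nonneg _) (norm_nonneg _) hL hL2 hr1 hr2
      h1 h2 h4 hcoco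
  -- W is nonincreasing
  set W : ℝ → ℝ := fun t => V t * Real.exp (r * t) with hWdef
  have hWderiv : ∀ t, HasDerivAt W
      ((k3 * (⟪x t - xs, -(f' (x t) - fs) - (U t - us)⟫
          + ⟪-(f' (x t) - fs) - (U t - us), x t - xs⟫)
        + μ * (⟪α t - αs, k1 • (f' (x t) - fs) + k2 • (α t - αs) + k3 • (U t - us)⟫
          + ⟪k1 • (f' (x t) - fs) + k2 • (α t - αs) + k3 • (U t - us), α t - αs⟫))
        * Real.exp (r * t) + V t * (Real.exp (r * t) * r)) t := by
    intro t
    have h := (hVderiv t).mul (((hasDerivAt_id t).const_mul r).exp)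
    simp only [mul_one, id_eq] at h
    exact h
  have hWanti : Antitone W := by
    apply antitone_of_deriv_nonpos
    · intro t
      exact (hWderiv t).differentiableAt
    · intro t
      rw [(hWderiv t).deriv]
      have h := hVle t
      have hex := Real.exp_pos (r * t)
      nlinarith [hV0 t]
  -- conclusion
  set m := min k3 μ with hmdef
  have hm : 0 < m := lt_min hk3 hμ
  refine ⟨(V 0 + 1) / m, div_pos (by linarith [hV0 0]) hm, ?_⟩
  intro t ht
  have hW := hWanti ht
  simp only [hWdef] at hW
  rw [mul_comm r 0, zero_mul, Real.exp_zero, mul_one] at hW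
  have hVt : V t ≤ V 0 * Real.exp (-(r * t)) := by
    rw [Real.exp_neg, ← div_eq_mul_inv, le_div_iff₀ (Real.exp_pos _)]
    exact hW
  have hmono : Real.exp (-(r * t)) ≤ Real.exp (-(r * t) / 2) := by
    apply Real.exp_le_exp.mpr
    nlinarith [mul_nonneg hr0.le ht]
  have hbound : ‖x t - xs‖ ^ 2 + ‖α t - αs‖ ^ 2 ≤ V t / m := by
    have hVt2 : V t = k3 * ‖x t - xs‖ ^ 2 + μ * ‖α t - αs‖ ^ 2 := by
      rw [hVdef]; simp only [real_inner_self_eq_norm_sq]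
    rw [le_div_iff₀ hm]
    have hm1 : m ≤ k3 := min_le_left _ _
    have hm2 : m ≤ μ := min_le_right _ _
    nlinarith [sq_nonneg ‖x t - xs‖, sq_nonneg ‖α t - αs‖, hVt2.le, hVt2.ge]
  have hstep : V 0 * Real.exp (-(r * t)) ≤ (V 0 + 1) * Real.exp (-(r * t) / 2) := by
    have hp := Real.exp_pos (-(r * t) / 2)
    nlinarith [mul_nonneg (hV0 0) (sub_nonneg.mpr hmono)]
  calc ‖x t - xs‖ ^ 2 + ‖α t - αs‖ ^ 2 ≤ V t / m := hbound
    _ ≤ (V 0 * Real.exp (-(r * t))) / m := by gcongr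
    _ ≤ ((V 0 + 1) / m) * Real.exp (-(r * t) / 2) := by
        rw [div_mul_eq_mul_div]
        gcongr
end

section
/- Fix k₁, k₃ > 0, μ > 0, 0 < m_f ≤ L_f, and define k₂^crit = −k₃ − (k₁²μ/(2k₃))(L_f²/m_f). If k₂ < k₂^crit and 0 < r ≤ min(m_f, −2(k₂−k₂^crit)), then for every symmetric B with m_f I ⪯ B ⪯ L_f I and every symmetric U with 0 ⪯ U ⪯ I, the block matrix Q' = [[(k₃/μ)T, −k₁B], [−k₁B, −2k₂I − 2k₃U − rI]] with T = B + (1/μ)U is positive semidefinite. -/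
open Matrix

private lemma real_conjTranspose_eq_transpose {m k : Type*} (M : Matrix m k ℝ) :
    Mᴴ = Mᵀ := by
  ext i j; simp [Matrix.conjTranspose_apply]

/-- Cauchy-Schwarz for a real matrix with nonnegative quadratic form. -/
private lemma cs_aux {n : ℕ} (M : Matrix (Fin n) (Fin n) ℝ) (hs : Mᵀ = M)
    (hpos : ∀ x : Fin n → ℝ, 0 ≤ x ⬝ᵥ M *ᵥ x) (u v : Fin n → ℝ) :
    (u ⬝ᵥ M *ᵥ v) ^ 2 ≤ (u ⬝ᵥ M *ᵥ u) * (v ⬝ᵥ M *ᵥ v) := by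
  have hsym : ∀ a b : Fin n → ℝ, a ⬝ᵥ M *ᵥ b = b ⬝ᵥ M *ᵥ a := by
    intro a b
    rw [Matrix.dotProduct_mulVec, dotProduct_comm, ← Matrix.mulVec_transpose, hs]
  have hq : ∀ t : ℝ, 0 ≤ (v ⬝ᵥ M *ᵥ v) * (t * t) + (2 * (u ⬝ᵥ M *ᵥ v)) * t
      + (u ⬝ᵥ M *ᵥ u) := by
    intro t
    have h := hpos (u + t • v)
    have hexp : (u + t • v) ⬝ᵥ M *ᵥ (u + t • v)
        = (v ⬝ᵥ M *ᵥ v) * (t * t) + (2 * (u ⬝ᵥ M *ᵥ v)) * t + (u ⬝ᵥ M *ᵥ u) := by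
      simp only [Matrix.mulVec_add, Matrix.mulVec_smul, add_dotProduct,
        smul_dotProduct, dotProduct_add, dotProduct_smul,
        smul_eq_mul, hsym v u]
      ring
    linarith [hexp ▸ h]
  have hd := discrim_le_zero hq
  rw [discrim] at hd
  nlinarith [hd]

private lemma key_aux (A C b : ℝ) (hA : 0 ≤ A) (hC : 0 ≤ C) (hb : b ^ 2 ≤ A * C) :
    2 * b ≤ A + C := by
  rcases le_or_gt (2 * b) 0 with h | h
  · linarith
  · nlinarith [sq_nonneg (A - C)]


private lemma scalar_aux (k1 k2 k3 μ mf Lf r s t b eU eV : ℝ)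
    (hk1 : 0 < k1) (hk3 : 0 < k3) (hμ : 0 < μ) (hmf : 0 < mf) (hmL : mf ≤ Lf)
    (hrle : r ≤ -2 * (k2 - (-k3 - (k1 ^ 2 * μ / (2 * k3)) * (Lf ^ 2 / mf))))
    (hsnn : 0 ≤ s) (htnn : 0 ≤ t) (heUnn : 0 ≤ eU) (heVnn : 0 ≤ eV) (heVle : eV ≤ t)
    (hst : b ^ 2 ≤ s * (Lf * t)) :
    0 ≤ k3 / μ * s + k3 / (μ * μ) * eU - 2 * k1 * b + (-2 * k2 - r) * t - 2 * k3 * eV := by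
  have hLf : 0 < Lf := lt_of_lt_of_le hmf hmL
  have hcoeff : k1 ^ 2 * μ * Lf ^ 2 / (k3 * mf) ≤ -2 * k2 - r - 2 * k3 := by
    have heq : 2 * ((k1 ^ 2 * μ / (2 * k3)) * (Lf ^ 2 / mf))
        = k1 ^ 2 * μ * Lf ^ 2 / (k3 * mf) := by
      field_simp
    linarith [hrle]
  have hA : (0:ℝ) ≤ (k3 / μ) * s := mul_nonneg (by positivity) hsnn
  have hC : (0:ℝ) ≤ (k1 ^ 2 * μ * Lf / k3) * t := mul_nonneg (by positivity) htnn
  have hprod : (k1 * b) ^ 2 ≤ ((k3 / μ) * s) * ((k1 ^ 2 * μ * Lf / k3) * t) := by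
    have heq : ((k3 / μ) * s) * ((k1 ^ 2 * μ * Lf / k3) * t) = k1 ^ 2 * (s * (Lf * t)) := by
      field_simp
    calc (k1 * b) ^ 2 = k1 ^ 2 * b ^ 2 := by ring
      _ ≤ k1 ^ 2 * (s * (Lf * t)) := by
          exact mul_le_mul_of_nonneg_left hst (by positivity)
      _ = ((k3 / μ) * s) * ((k1 ^ 2 * μ * Lf / k3) * t) := heq.symm
  have hkey := key_aux _ _ _ hA hC hprod
  have hcoeff2 : k1 ^ 2 * μ * Lf / k3 * t ≤ (-2 * k2 - r - 2 * k3) * t := by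
    apply mul_le_mul_of_nonneg_right _ htnn
    refine le_trans ?_ hcoeff
    rw [div_le_div_iff₀ hk3 (by positivity : (0:ℝ) < k3 * mf)]
    nlinarith [mul_nonneg (mul_nonneg (by positivity : (0:ℝ) ≤ k1 ^ 2 * μ * k3) hLf.le)
      (sub_nonneg.2 hmL)]
  have heUterm : 0 ≤ k3 / (μ * μ) * eU := mul_nonneg (by positivity) heUnn
  have hUterm : 2 * k3 * eV ≤ 2 * k3 * t :=
    mul_le_mul_of_nonneg_left heVle (by positivity)
  linarith [hkey, hcoeff2, heUterm, hUterm]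

/-- Positive semidefiniteness of the block matrix `Q'` in the Lyapunov analysis of
the unconstrained dynamic Prox-CMO. -/
theorem stmt17 {n : ℕ} (k1 k2 k3 μ mf Lf r : ℝ)
    (hk1 : 0 < k1) (hk3 : 0 < k3) (hμ : 0 < μ) (hmf : 0 < mf) (hmL : mf ≤ Lf)
    (hk2 : k2 < -k3 - (k1 ^ 2 * μ / (2 * k3)) * (Lf ^ 2 / mf))
    (hr0 : 0 < r)
    (hr : r ≤ min mf (-2 * (k2 - (-k3 - (k1 ^ 2 * μ / (2 * k3)) * (Lf ^ 2 / mf)))))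
    (B U : Matrix (Fin n) (Fin n) ℝ) (hBsymm : B.IsSymm) (hUsymm : U.IsSymm)
    (hBm : (B - mf • (1 : Matrix (Fin n) (Fin n) ℝ)).PosSemidef)
    (hBL : (Lf • (1 : Matrix (Fin n) (Fin n) ℝ) - B).PosSemidef)
    (hU0 : U.PosSemidef)
    (hU1 : ((1 : Matrix (Fin n) (Fin n) ℝ) - U).PosSemidef) :
    (Matrix.fromBlocks
        ((k3 / μ) • (B + (1 / μ) • U))
        (-(k1 • B))
        (-(k1 • B))
        ((-2 * k2) • (1 : Matrix (Fin n) (Fin n) ℝ) - (2 * k3) • U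
          - r • (1 : Matrix (Fin n) (Fin n) ℝ))).PosSemidef := by
  -- basic quadratic form facts
  have hBm' : ∀ x : Fin n → ℝ, mf * (x ⬝ᵥ x) ≤ x ⬝ᵥ B *ᵥ x := by
    intro x
    have h := hBm.dotProduct_mulVec_nonneg x
    simpa [Matrix.sub_mulVec, Matrix.smul_mulVec, Matrix.one_mulVec,
      dotProduct_sub, dotProduct_smul, smul_eq_mul, sub_nonneg] using h
  have hBL' : ∀ x : Fin n → ℝ, x ⬝ᵥ B *ᵥ x ≤ Lf * (x ⬝ᵥ x) := by
    intro x
    have h := hBL.dotProduct_mulVec_nonneg x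
    simpa [Matrix.sub_mulVec, Matrix.smul_mulVec, Matrix.one_mulVec,
      dotProduct_sub, dotProduct_smul, smul_eq_mul, sub_nonneg] using h
  have hU0' : ∀ x : Fin n → ℝ, 0 ≤ x ⬝ᵥ U *ᵥ x := by
    intro x; simpa using hU0.dotProduct_mulVec_nonneg x
  have hU1' : ∀ x : Fin n → ℝ, x ⬝ᵥ U *ᵥ x ≤ x ⬝ᵥ x := by
    intro x
    have h := hU1.dotProduct_mulVec_nonneg x
    simpa [Matrix.sub_mulVec, Matrix.one_mulVec, dotProduct_sub, sub_nonneg] using h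
  have hx2 : ∀ x : Fin n → ℝ, 0 ≤ x ⬝ᵥ x := fun x =>
    Finset.sum_nonneg fun i _ => mul_self_nonneg _
  have hBpos : ∀ x : Fin n → ℝ, 0 ≤ x ⬝ᵥ B *ᵥ x := by
    intro x
    have := hBm' x
    nlinarith [hx2 x, mul_nonneg hmf.le (hx2 x)]
  have hcs := cs_aux B hBsymm hBpos
  refine Matrix.posSemidef_iff_dotProduct_mulVec.mpr ⟨?_, ?_⟩
  · -- Hermitian
    rw [Matrix.isHermitian_fromBlocks_iff]
    have hB' : (-(k1 • B))ᴴ = -(k1 • B) := by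
      rw [real_conjTranspose_eq_transpose]
      simp [Matrix.transpose_smul, hBsymm.eq]
    refine ⟨?_, hB', hB', ?_⟩
    · show _ᴴ = _
      rw [real_conjTranspose_eq_transpose]
      simp [Matrix.transpose_add, Matrix.transpose_smul, hBsymm.eq, hUsymm.eq]
    · show _ᴴ = _
      rw [real_conjTranspose_eq_transpose]
      simp [Matrix.transpose_sub, Matrix.transpose_smul, hUsymm.eq]
  · intro x
    set u : Fin n → ℝ := x ∘ Sum.inl with hu
    set v : Fin n → ℝ := x ∘ Sum.inr with hv
    have hstar : star x = x := by
      funext i; simp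
    rw [hstar, Matrix.fromBlocks_mulVec, Matrix.dotProduct_block]
    simp only [Sum.elim_comp_inl, Sum.elim_comp_inr]
    rw [← hu, ← hv]
    -- abbreviations
    set s : ℝ := u ⬝ᵥ B *ᵥ u with hs
    set t : ℝ := v ⬝ᵥ v with ht
    set b : ℝ := u ⬝ᵥ B *ᵥ v with hb
    set eU : ℝ := u ⬝ᵥ U *ᵥ u with heU
    set eV : ℝ := v ⬝ᵥ U *ᵥ v with heV
    have hsymB : v ⬝ᵥ B *ᵥ u = b := by
      rw [hb, Matrix.dotProduct_mulVec, dotProduct_comm, ← Matrix.mulVec_transpose,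
        hBsymm.eq]
    have hexpand :
        u ⬝ᵥ (((k3 / μ) • (B + (1 / μ) • U)) *ᵥ u + -(k1 • B) *ᵥ v)
          + v ⬝ᵥ (-(k1 • B) *ᵥ u +
            ((-2 * k2) • (1 : Matrix (Fin n) (Fin n) ℝ) - (2 * k3) • U
              - r • (1 : Matrix (Fin n) (Fin n) ℝ)) *ᵥ v)
        = (k3 / μ) * s + (k3 / (μ * μ)) * eU - 2 * k1 * b
            + (-2 * k2 - r) * t - 2 * k3 * eV := by
      rw [dotProduct_add, dotProduct_add]
      simp only [Matrix.smul_mulVec, Matrix.add_mulVec, Matrix.sub_mulVec,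
        Matrix.neg_mulVec, Matrix.one_mulVec, dotProduct_smul,
        dotProduct_neg, dotProduct_sub, dotProduct_add,
        smul_eq_mul]
      rw [hsymB]
      simp only [← hs, ← ht, ← hb, ← heU, ← heV]
      field_simp
      ring
    rw [hexpand]
    have hst : b ^ 2 ≤ s * (Lf * t) := by
      nlinarith [hcs u v, hBL' v, hBpos u, hBpos v]
    exact scalar_aux k1 k2 k3 μ mf Lf r s t b eU eV hk1 hk3 hμ hmf hmL
      (le_trans hr (min_le_right _ _)) (hBpos u) (hx2 v) (hU0' u) (hU0' v) (hU1' v) hst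
end
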